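/- The function H(x,y) = ((4ax⁴ - 5)²x² + 25y²)² / (625(ax⁴ - 1)⁵) is a first integral of the system ẋ = -y + a y x⁴, ẏ = x + 5a x³ y² - (4/5)a x⁵ on the set where a x⁴ ≠ 1. -/

import Mathlib

/-- H(x,y) = ((4ax⁴-5)²x²+25y²)²/(625(ax⁴-1)⁵) is a first integral of
ẋ = -y+ayx⁴, ẏ = x+5ax³y²-(4/5)ax⁵ wherever ax⁴ ≠ 1. -/
theorem stmt_5 (a : ℝ) :
    ∀ x y : ℝ, a * x ^ 4 ≠ 1 →
      (-y + a * y * x ^ 4) *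
        deriv (fun x' : ℝ =>
          ((4 * a * x' ^ 4 - 5) ^ 2 * x' ^ 2 + 25 * y ^ 2) ^ 2 /
            (625 * (a * x' ^ 4 - 1) ^ 5)) x
      + (x + 5 * a * x ^ 3 * y ^ 2 - (4/5) * a * x ^ 5) *
        deriv (fun y' : ℝ =>
          ((4 * a * x ^ 4 - 5) ^ 2 * x ^ 2 + 25 * y' ^ 2) ^ 2 /
            (625 * (a * x ^ 4 - 1) ^ 5)) y = 0 := by
  intro x y h
  have hsub : a * x ^ 4 - 1 ≠ 0 := sub_ne_zero.mpr h
  have hD : (625 : ℝ) * (a * x ^ 4 - 1) ^ 5 ≠ 0 :=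
    mul_ne_zero (by norm_num) (pow_ne_zero _ hsub)
  have h1 : HasDerivAt (fun x' : ℝ => x' ^ 4) (4 * x ^ 3) x := by
    simpa using hasDerivAt_pow 4 x
  have h2 : HasDerivAt (fun x' : ℝ => 4 * a * x' ^ 4 - 5)
      (4 * a * (4 * x ^ 3)) x := (h1.const_mul (4 * a)).sub_const 5
  have h3 := h2.pow 2
  have h4 := h3.mul (hasDerivAt_pow 2 x)
  have h5 := h4.add_const (25 * y ^ 2)
  have hN := h5.pow 2
  have hd2 : HasDerivAt (fun x' : ℝ => a * x' ^ 4 - 1) (a * (4 * x ^ 3)) x :=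
    (h1.const_mul a).sub_const 1
  have hDd := (hd2.pow 5).const_mul (625 : ℝ)
  have hHx := hN.div hDd hD
  simp only [Pi.pow_def, Pi.mul_def, Pi.div_def] at hHx
  have hy1 : HasDerivAt (fun y' : ℝ =>
      ((4 * a * x ^ 4 - 5) ^ 2 * x ^ 2 + 25 * y' ^ 2) ^ 2)
      (2 * ((4 * a * x ^ 4 - 5) ^ 2 * x ^ 2 + 25 * y ^ 2) ^ 1 * (25 * (2 * y))) y := by
    have := ((((hasDerivAt_pow 2 y).const_mul (25 : ℝ)).const_add
      ((4 * a * x ^ 4 - 5) ^ 2 * x ^ 2)).pow 2)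
    simpa [Pi.pow_def] using this
  have hHy := hy1.div_const (625 * (a * x ^ 4 - 1) ^ 5)
  rw [hHx.deriv, hHy.deriv]
  field_simp
  ring
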